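/- Let G be a random vector in ℝⁿ with mean g, variance E[‖G−g‖²] ≤ s², and ‖g‖ ≤ λ/2 for some λ > 0. Let G̃ = clip(G, λ). Then the variance of the clipped vector satisfies E[‖G̃ − E[G̃]‖²] ≤ 18 s². -/

import Mathlib

open MeasureTheory

lemma variance_le_second_moment {Ω : Type*} [MeasurableSpace Ω]
    (μ : Measure Ω) [IsProbabilityMeasure μ]
    {E : Type*} [NormedAddCommGroup E] [InnerProductSpace ℝ E] [CompleteSpace E]
    (Y : Ω → E) (hY : Integrable Y μ) (hY2 : Integrable (fun ω => ‖Y ω‖ ^ 2) μ) :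
    (∫ ω, ‖Y ω - ∫ ω', Y ω' ∂μ‖ ^ 2 ∂μ) ≤ ∫ ω, ‖Y ω‖ ^ 2 ∂μ := by
  set m := ∫ ω', Y ω' ∂μ with hm
  have hexp : ∀ ω, ‖Y ω - m‖ ^ 2
      = ‖Y ω‖ ^ 2 - 2 * (inner ℝ m (Y ω) : ℝ) + ‖m‖ ^ 2 := by
    intro ω
    have := @norm_sub_sq_real E _ _ (Y ω) m
    have hc : (inner ℝ (Y ω) m : ℝ) = inner ℝ m (Y ω) := real_inner_comm _ _
    linarith
  have hint : Integrable (fun ω => (inner ℝ m (Y ω) : ℝ)) μ := Integrable.const_inner m hY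
  have h1 : (∫ ω, ‖Y ω - m‖ ^ 2 ∂μ)
      = (∫ ω, ‖Y ω‖ ^ 2 ∂μ) - 2 * (inner ℝ m m : ℝ) + ‖m‖ ^ 2 := by
    calc (∫ ω, ‖Y ω - m‖ ^ 2 ∂μ)
        = ∫ ω, (‖Y ω‖ ^ 2 - 2 * (inner ℝ m (Y ω) : ℝ) + ‖m‖ ^ 2) ∂μ := by
          exact integral_congr_ae (Filter.Eventually.of_forall hexp)
      _ = (∫ ω, (‖Y ω‖ ^ 2 - 2 * (inner ℝ m (Y ω) : ℝ)) ∂μ) + ∫ _ω, ‖m‖ ^ 2 ∂μ := by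
          exact integral_add (hY2.sub (hint.const_mul 2)) (integrable_const _)
      _ = (∫ ω, ‖Y ω‖ ^ 2 ∂μ) - (∫ ω, 2 * (inner ℝ m (Y ω) : ℝ) ∂μ) + ‖m‖ ^ 2 := by
          rw [integral_sub hY2 (hint.const_mul 2), integral_const]
          simp
      _ = (∫ ω, ‖Y ω‖ ^ 2 ∂μ) - 2 * (inner ℝ m m : ℝ) + ‖m‖ ^ 2 := by
          rw [integral_const_mul, integral_inner hY m]
  have h2 : (inner ℝ m m : ℝ) = ‖m‖ ^ 2 := real_inner_self_eq_norm_sq m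
  nlinarith [sq_nonneg ‖m‖]

theorem clipped_variance_bound (n : ℕ) {Ω : Type*} [MeasureSpace Ω]
    (μ : Measure Ω) [IsProbabilityMeasure μ]
    (G : Ω → EuclideanSpace ℝ (Fin n)) (g : EuclideanSpace ℝ (Fin n)) (s lam : ℝ)
    (hG : Integrable G μ) (hmean : (∫ ω, G ω ∂μ) = g)
    (hsq : Integrable (fun ω => ‖G ω - g‖ ^ 2) μ)
    (hvar : (∫ ω, ‖G ω - g‖ ^ 2 ∂μ) ≤ s ^ 2)
    (hlam : 0 < lam) (hg : ‖g‖ ≤ lam / 2)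
    (Gclip : Ω → EuclideanSpace ℝ (Fin n))
    (hclip : ∀ ω, Gclip ω = (min 1 (lam / ‖G ω‖)) • G ω) :
    (∫ ω, ‖Gclip ω - ∫ ω', Gclip ω' ∂μ‖ ^ 2 ∂μ) ≤ 18 * s ^ 2 := by
  -- pointwise bound
  have hpt : ∀ ω, ‖Gclip ω - g‖ ≤ 2 * ‖G ω - g‖ := by
    intro ω
    rcases le_or_gt ‖G ω‖ lam with hle | hgt
    · -- clip = G here (or G ω = 0)
      have hGeq : Gclip ω = G ω := by
        rcases eq_or_ne (G ω) 0 with h0 | h0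
        · rw [hclip ω, h0, smul_zero]
        · have hpos : 0 < ‖G ω‖ := norm_pos_iff.mpr h0
          have : (1:ℝ) ≤ lam / ‖G ω‖ := (one_le_div hpos).mpr hle
          rw [hclip ω, min_eq_left this, one_smul]
      rw [hGeq]
      nlinarith [norm_nonneg (G ω - g)]
    · have hpos : 0 < ‖G ω‖ := lt_trans hlam hgt
      have hdiv : lam / ‖G ω‖ < 1 := (div_lt_one hpos).mpr hgt
      have hGeq : Gclip ω = (lam / ‖G ω‖) • G ω := by
        rw [hclip ω, min_eq_right hdiv.le]
      have hdist : ‖Gclip ω - G ω‖ = ‖G ω‖ - lam := by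
        rw [hGeq]
        have h1 : (lam / ‖G ω‖) • G ω - G ω = (lam / ‖G ω‖ - 1) • G ω := by
          rw [sub_smul, one_smul]
        rw [h1, norm_smul, Real.norm_eq_abs, abs_of_nonpos (by linarith)]
        have : lam / ‖G ω‖ * ‖G ω‖ = lam := div_mul_cancel₀ lam hpos.ne'
        nlinarith
      have htri : ‖Gclip ω - g‖ ≤ ‖Gclip ω - G ω‖ + ‖G ω - g‖ := by
        have := norm_sub_le_norm_sub_add_norm_sub (Gclip ω) (G ω) g
        linarith [norm_sub_le (Gclip ω - G ω) (g - G ω)]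
      have hlow : ‖G ω‖ - ‖g‖ ≤ ‖G ω - g‖ := by
        have := norm_sub_norm_le (G ω) g
        linarith [le_abs_self (‖G ω‖ - ‖g‖)]
      linarith
  -- measurability of Gclip
  have hmeas : AEStronglyMeasurable Gclip μ := by
    have hn : AEMeasurable (fun ω => ‖G ω‖) μ := hG.aestronglyMeasurable.norm.aemeasurable
    have hc : AEMeasurable (fun ω => min 1 (lam / ‖G ω‖)) μ :=
      aemeasurable_const.min (aemeasurable_const.div hn)
    have : AEStronglyMeasurable (fun ω => (min 1 (lam / ‖G ω‖)) • G ω) μ :=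
      hc.aestronglyMeasurable.smul hG.aestronglyMeasurable
    exact this.congr (Filter.Eventually.of_forall fun ω => (hclip ω).symm)
  -- integrability of Gclip
  have hnb : ∀ ω, ‖Gclip ω‖ ≤ ‖G ω‖ := by
    intro ω
    rw [hclip ω, norm_smul, Real.norm_eq_abs]
    have h0 : 0 ≤ min 1 (lam / ‖G ω‖) :=
      le_min one_pos.le (div_nonneg hlam.le (norm_nonneg _))
    have h1 : min 1 (lam / ‖G ω‖) ≤ 1 := min_le_left _ _
    rw [abs_of_nonneg h0]
    nlinarith [norm_nonneg (G ω)]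
  have hGclip : Integrable Gclip μ :=
    hG.mono hmeas (Filter.Eventually.of_forall fun ω => by
      simpa using hnb ω)
  -- integrability of ‖Gclip - g‖^2
  have hY : Integrable (fun ω => Gclip ω - g) μ := hGclip.sub (integrable_const g)
  have hY2 : Integrable (fun ω => ‖Gclip ω - g‖ ^ 2) μ := by
    refine (hsq.const_mul 4).mono ?_ (Filter.Eventually.of_forall fun ω => ?_)
    · exact (hY.aestronglyMeasurable.norm.aemeasurable.pow_const 2).aestronglyMeasurable
    · have h := hpt ω
      have h0 : (0:ℝ) ≤ ‖Gclip ω - g‖ := norm_nonneg _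
      have h1 : (0:ℝ) ≤ ‖G ω - g‖ := norm_nonneg _
      rw [Real.norm_eq_abs, Real.norm_eq_abs, abs_of_nonneg (by positivity),
        abs_of_nonneg (by positivity)]
      nlinarith
  -- apply helper lemma to Y = Gclip - g
  have hmY : (∫ ω, (Gclip ω - g) ∂μ) = (∫ ω', Gclip ω' ∂μ) - g := by
    rw [integral_sub hGclip (integrable_const g), integral_const]
    simp
  have hkey := variance_le_second_moment μ (fun ω => Gclip ω - g) hY hY2
  rw [hmY] at hkey
  have hre : ∀ ω : Ω, (Gclip ω - g) - ((∫ ω', Gclip ω' ∂μ) - g)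
      = Gclip ω - ∫ ω', Gclip ω' ∂μ := fun ω => sub_sub_sub_cancel_right _ _ _
  simp only [hre] at hkey
  have hbound2 : (∫ ω, ‖Gclip ω - g‖ ^ 2 ∂μ) ≤ 4 * s ^ 2 := by
    have : (∫ ω, ‖Gclip ω - g‖ ^ 2 ∂μ) ≤ ∫ ω, 4 * ‖G ω - g‖ ^ 2 ∂μ := by
      refine integral_mono_ae hY2 (hsq.const_mul 4)
        (Filter.Eventually.of_forall fun ω => ?_)
      have h := hpt ω
      have h1 : (0:ℝ) ≤ ‖G ω - g‖ := norm_nonneg _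
      have h0 : (0:ℝ) ≤ ‖Gclip ω - g‖ := norm_nonneg _
      show ‖Gclip ω - g‖ ^ 2 ≤ 4 * ‖G ω - g‖ ^ 2
      nlinarith
    rw [integral_const_mul] at this
    linarith
  have hs2 : 0 ≤ s ^ 2 := sq_nonneg s
  linarith
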